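/- Stochastic strict server yields stochastic service curve: suppose a server with input A and output A* satisfies, during any backlogged period [s₀, s) (a maximal interval during which A(u) > A*(u) for s₀ < u ≤ s, with A(s₀) = A*(s₀)), A*(s₀, s) ≥ β̂(s − s₀) − I(s₀, s), where β̂ is a function with β̂(0) ≤ 0 and I is a non-decreasing impairment process with I(0) = 0. Let γ be a curve and set β(t) = β̂(t) − γ(t). Then for all t, sup_{0 ≤ s ≤ t} [(A ⊗ β)(s) − A*(s)] ≤ max(0, sup_{0 ≤ s ≤ t} sup_{0 ≤ u ≤ s} [I(u,s) − γ(s−u)]). Consequently, if I ∼_mb ⟨g, γ⟩ then the server provides stochastic service curve ⟨g, β⟩. -/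

import Mathlib

open MeasureTheory

noncomputable def ssup (t : ℕ) (f : ℕ → ℝ) : ℝ :=
  (Finset.range (t + 1)).sup' Finset.nonempty_range_add_one f

noncomputable def pconv (A β : ℕ → ℝ) (t : ℕ) : ℝ :=
  (Finset.range (t + 1)).inf' Finset.nonempty_range_add_one (fun s => A s + β (t - s))

/-- m.b.c stochastic arrival curve. -/
def mbcP {Ω : Type*} [MeasurableSpace Ω] (μ : Measure Ω)
    (A : Ω → ℕ → ℝ) (f : ℝ → ℝ) (α : ℕ → ℝ) : Prop :=
  ∀ t : ℕ, ∀ x : ℝ, 0 ≤ x →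
    μ {ω | ssup t (fun s => ssup s (fun u => A ω s - A ω u - α (s - u))) > x} ≤
      ENNReal.ofReal (f x)

/-- Stochastic service curve. -/
def sscP {Ω : Type*} [MeasurableSpace Ω] (μ : Measure Ω)
    (A As : Ω → ℕ → ℝ) (g : ℝ → ℝ) (β : ℕ → ℝ) : Prop :=
  ∀ t : ℕ, ∀ x : ℝ, 0 ≤ x →
    μ {ω | ssup t (fun s => pconv (A ω) β s - As ω s) > x} ≤ ENNReal.ofReal (g x)

theorem stmt19 {Ω : Type*} [MeasurableSpace Ω] (μ : Measure Ω)
    [IsProbabilityMeasure μ] (A As I : Ω → ℕ → ℝ) (βh γ : ℕ → ℝ) (g : ℝ → ℝ)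
    (hA0 : ∀ ω, A ω 0 = 0) (hAs0 : ∀ ω, As ω 0 = 0) (hI0 : ∀ ω, I ω 0 = 0)
    (hAsle : ∀ ω t, As ω t ≤ A ω t)
    (hAsmono : ∀ ω, Monotone (As ω)) (hImono : ∀ ω, Monotone (I ω))
    (hβh0 : βh 0 ≤ 0)
    (hstrict : ∀ ω, ∀ s : ℕ, A ω s = As ω s ∨
      ∃ s₀ ≤ s, A ω s₀ = As ω s₀ ∧
        As ω s - As ω s₀ ≥ βh (s - s₀) - (I ω s - I ω s₀)) :
    (∀ ω t, ssup t (fun s => pconv (A ω) (fun n => βh n - γ n) s - As ω s) ≤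
        max 0 (ssup t (fun s => ssup s (fun u => I ω s - I ω u - γ (s - u))))) ∧
    (mbcP μ I g γ → sscP μ A As g (fun n => βh n - γ n)) := by
  have key : ∀ ω t, ssup t (fun s => pconv (A ω) (fun n => βh n - γ n) s - As ω s) ≤
      max 0 (ssup t (fun s => ssup s (fun u => I ω s - I ω u - γ (s - u)))) := by
    intro ω t
    apply Finset.sup'_le
    intro s hs
    rw [Finset.mem_range, Nat.lt_succ_iff] at hs
    have hM : ∀ s₀, s₀ ≤ s → I ω s - I ω s₀ - γ (s - s₀) ≤
        ssup t (fun s => ssup s (fun u => I ω s - I ω u - γ (s - u))) := by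
      intro s₀ h₀
      simp only [ssup]
      exact le_trans
        (Finset.le_sup' (fun u => I ω s - I ω u - γ (s - u))
          (Finset.mem_range.mpr (Nat.lt_succ_of_le h₀)))
        (Finset.le_sup'
          (fun s => (Finset.range (s + 1)).sup' Finset.nonempty_range_add_one
            (fun u => I ω s - I ω u - γ (s - u)))
          (Finset.mem_range.mpr (Nat.lt_succ_of_le hs)))
    have hmax := le_max_right (0 : ℝ)
      (ssup t (fun s => ssup s (fun u => I ω s - I ω u - γ (s - u))))
    rcases hstrict ω s with h | ⟨s₀, hs₀, hA, hineq⟩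
    · have hp : pconv (A ω) (fun n => βh n - γ n) s ≤ A ω s + (βh (s - s) - γ (s - s)) :=
        Finset.inf'_le _ (Finset.mem_range.mpr (Nat.lt_succ_of_le le_rfl))
      rw [Nat.sub_self] at hp
      have h2 := hM s le_rfl
      rw [Nat.sub_self] at h2
      rw [h] at hp
      linarith
    · have hp : pconv (A ω) (fun n => βh n - γ n) s ≤ A ω s₀ + (βh (s - s₀) - γ (s - s₀)) :=
        Finset.inf'_le _ (Finset.mem_range.mpr (Nat.lt_succ_of_le hs₀))
      have h2 := hM s₀ hs₀
      linarith
  refine ⟨key, ?_⟩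
  intro hmbc t x hx
  refine le_trans (μ.mono ?_) (hmbc t x hx)
  intro ω hω
  simp only [Set.mem_setOf_eq] at hω ⊢
  have := lt_of_lt_of_le hω (key ω t)
  rcases lt_max_iff.mp this with h | h
  · exact absurd hx (not_le.mpr h)
  · exact h
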